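/- Let ω ∈ ℕ, 0 ≤ k ≤ ω, and let p, p' be points of the grid {0,…,2^ω−1}². Then p and p' lie in the same level-k dyadic cell if and only if ⌊morton_ω(p)/4^k⌋ = ⌊morton_ω(p')/4^k⌋, i.e. if and only if their Morton codes agree on the 2(ω−k) most significant bits. -/

import Mathlib

/-- The Morton (Z-order) encoding of a pair of `ω`-bit numbers, obtained by
interleaving binary digits: `morton ω x y = Σ_{i<ω} (bitᵢ(x)·2^{2i+1} + bitᵢ(y)·2^{2i})`. -/
def morton (ω : ℕ) (x y : ℕ) : ℕ :=
  ∑ i ∈ Finset.range ω,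
    ((Nat.testBit x i).toNat * 2 ^ (2 * i + 1) + (Nat.testBit y i).toNat * 2 ^ (2 * i))

lemma morton_succ (m x y : ℕ) :
    morton (m+1) x y = 2 * (x % 2) + y % 2 + 4 * morton m (x/2) (y/2) := by
  unfold morton
  rw [Finset.sum_range_succ', Finset.mul_sum]
  have h0 : ∀ n : ℕ, (Nat.testBit n 0).toNat = n % 2 := by
    intro n
    rw [Nat.toNat_testBit]
    simp
  have hstep : ∀ i, ((Nat.testBit x (i+1)).toNat * 2 ^ (2 * (i+1) + 1)
      + (Nat.testBit y (i+1)).toNat * 2 ^ (2 * (i+1)))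
      = 4 * ((Nat.testBit (x/2) i).toNat * 2 ^ (2 * i + 1)
      + (Nat.testBit (y/2) i).toNat * 2 ^ (2 * i)) := by
    intro i
    rw [Nat.testBit_div_two, Nat.testBit_div_two]
    have e1 : 2 * (i+1) + 1 = (2*i+1) + 2 := by ring
    have e2 : 2 * (i+1) = (2*i) + 2 := by ring
    rw [e1, e2, pow_add, pow_add]
    ring
  calc (∑ i ∈ Finset.range m, ((Nat.testBit x (i+1)).toNat * 2 ^ (2 * (i+1) + 1)
          + (Nat.testBit y (i+1)).toNat * 2 ^ (2 * (i+1))))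
        + ((Nat.testBit x 0).toNat * 2 ^ (2 * 0 + 1) + (Nat.testBit y 0).toNat * 2 ^ (2 * 0))
      = (∑ i ∈ Finset.range m, 4 * ((Nat.testBit (x/2) i).toNat * 2 ^ (2 * i + 1)
          + (Nat.testBit (y/2) i).toNat * 2 ^ (2 * i)))
        + (2 * (x % 2) + y % 2) := by
        congr 1
        · apply Finset.sum_congr rfl
          intro i _
          have := hstep i
          simpa using this
        · rw [h0, h0]; norm_num; ring
  _ = 2 * (x % 2) + y % 2 + ∑ i ∈ Finset.range m,
        4 * ((Nat.testBit (x/2) i).toNat * 2 ^ (2 * i + 1)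
          + (Nat.testBit (y/2) i).toNat * 2 ^ (2 * i)) := by ring

lemma morton_lt (m x y : ℕ) : morton m x y < 4 ^ m := by
  induction m generalizing x y with
  | zero => simp [morton]
  | succ n ih =>
    rw [morton_succ]
    have h := ih (x/2) (y/2)
    have hx : x % 2 < 2 := Nat.mod_lt _ two_pos
    have hy : y % 2 < 2 := Nat.mod_lt _ two_pos
    have h4 : (4:ℕ) ^ (n+1) = 4 * 4 ^ n := by ring
    omega

lemma morton_inj (m : ℕ) : ∀ x y x' y', x < 2^m → y < 2^m → x' < 2^m → y' < 2^m →
    morton m x y = morton m x' y' → x = x' ∧ y = y' := by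
  induction m with
  | zero => intro x y x' y' hx hy hx' hy' _; simp at hx hy hx' hy'; omega
  | succ n ih =>
    intro x y x' y' hx hy hx' hy' h
    rw [morton_succ, morton_succ] at h
    have m1 := morton_lt n (x/2) (y/2)
    have m2 := morton_lt n (x'/2) (y'/2)
    have hM : morton n (x/2) (y/2) = morton n (x'/2) (y'/2) := by omega
    have h2n : (2:ℕ)^(n+1) = 2 * 2^n := by ring
    have := ih (x/2) (y/2) (x'/2) (y'/2) (by omega) (by omega) (by omega) (by omega) hM
    omega

lemma morton_split (k m x y : ℕ) :
    morton (k + m) x y = morton k x y + 4^k * morton m (x / 2^k) (y / 2^k) := by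
  unfold morton
  rw [Finset.sum_range_add, Finset.mul_sum]
  congr 1
  apply Finset.sum_congr rfl
  intro i _
  have hx : Nat.testBit (x / 2^k) i = Nat.testBit x (k + i) := by
    rw [← Nat.shiftRight_eq_div_pow, Nat.testBit_shiftRight]
  have hy : Nat.testBit (y / 2^k) i = Nat.testBit y (k + i) := by
    rw [← Nat.shiftRight_eq_div_pow, Nat.testBit_shiftRight]
  have h4 : (4:ℕ)^k = 2^(2*k) := by
    rw [show (4:ℕ) = 2^2 from rfl, ← pow_mul]
  have e1 : 2 * (k + i) + 1 = 2*k + (2*i+1) := by ring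
  have e2 : 2 * (k + i) = 2*k + 2*i := by ring
  rw [hx, hy, h4, e1, e2, pow_add, pow_add]
  ring

lemma morton_div (ω k x y : ℕ) (hk : k ≤ ω) :
    morton ω x y / 4^k = morton (ω - k) (x / 2^k) (y / 2^k) := by
  have h := morton_split k (ω - k) x y
  rw [Nat.add_sub_cancel' hk] at h
  rw [h, Nat.add_mul_div_left _ _ (by positivity : (0:ℕ) < 4^k),
    Nat.div_eq_of_lt (morton_lt k x y), Nat.zero_add]

/-- Two grid points `p, p'` of `{0,…,2^ω−1}²` lie in the same level-`k` dyadic cell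
(for `k ≤ ω`) if and only if `⌊morton ω p / 4^k⌋ = ⌊morton ω p' / 4^k⌋`, i.e. iff
their Morton codes agree on the `2(ω−k)` most significant bits. -/
theorem morton_same_cell_iff (ω k : ℕ) (hk : k ≤ ω) (p p' : ℕ × ℕ)
    (hp1 : p.1 < 2 ^ ω) (hp2 : p.2 < 2 ^ ω)
    (hp1' : p'.1 < 2 ^ ω) (hp2' : p'.2 < 2 ^ ω) :
    (∃ a b : ℕ, a < 2 ^ ω ∧ b < 2 ^ ω ∧ 2 ^ k ∣ a ∧ 2 ^ k ∣ b ∧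
        (a ≤ p.1 ∧ p.1 < a + 2 ^ k ∧ b ≤ p.2 ∧ p.2 < b + 2 ^ k) ∧
        (a ≤ p'.1 ∧ p'.1 < a + 2 ^ k ∧ b ≤ p'.2 ∧ p'.2 < b + 2 ^ k)) ↔
      morton ω p.1 p.2 / 4 ^ k = morton ω p'.1 p'.2 / 4 ^ k := by
  have hkpos : (0:ℕ) < 2^k := Nat.pow_pos (by norm_num)
  have key : ∀ n a : ℕ, 2^k ∣ a → a ≤ n → n < a + 2^k → n / 2^k = a / 2^k := by
    rintro n a ⟨q, rfl⟩ h1 h2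
    rw [Nat.mul_div_cancel_left q hkpos, Nat.div_eq_of_lt_le]
    · rw [Nat.mul_comm]; exact h1
    · calc n < 2^k * q + 2^k := h2
        _ = (q+1) * 2^k := by ring
  rw [morton_div ω k _ _ hk, morton_div ω k _ _ hk]
  constructor
  · rintro ⟨a, b, ha, hb, hda, hdb, ⟨h1, h2, h3, h4⟩, ⟨h1', h2', h3', h4'⟩⟩
    rw [key p.1 a hda h1 h2, ← key p'.1 a hda h1' h2',
        key p.2 b hdb h3 h4, ← key p'.2 b hdb h3' h4']
  · intro h
    have hb1 : p.1 / 2^k < 2^(ω-k) := by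
      rw [Nat.div_lt_iff_lt_mul hkpos, ← pow_add, Nat.sub_add_cancel hk]; exact hp1
    have hb2 : p.2 / 2^k < 2^(ω-k) := by
      rw [Nat.div_lt_iff_lt_mul hkpos, ← pow_add, Nat.sub_add_cancel hk]; exact hp2
    have hb1' : p'.1 / 2^k < 2^(ω-k) := by
      rw [Nat.div_lt_iff_lt_mul hkpos, ← pow_add, Nat.sub_add_cancel hk]; exact hp1'
    have hb2' : p'.2 / 2^k < 2^(ω-k) := by
      rw [Nat.div_lt_iff_lt_mul hkpos, ← pow_add, Nat.sub_add_cancel hk]; exact hp2'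
    obtain ⟨e1, e2⟩ := morton_inj (ω-k) _ _ _ _ hb1 hb2 hb1' hb2' h
    refine ⟨2^k * (p.1 / 2^k), 2^k * (p.2 / 2^k), ?_, ?_, ⟨_, rfl⟩, ⟨_, rfl⟩, ?_, ?_⟩
    · have d := Nat.div_add_mod p.1 (2^k); omega
    · have d := Nat.div_add_mod p.2 (2^k); omega
    · have d1 := Nat.div_add_mod p.1 (2^k)
      have d2 := Nat.div_add_mod p.2 (2^k)
      have m1 := Nat.mod_lt p.1 hkpos
      have m2 := Nat.mod_lt p.2 hkpos
      omega
    · have d1 := Nat.div_add_mod p'.1 (2^k)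
      have d2 := Nat.div_add_mod p'.2 (2^k)
      have m1 := Nat.mod_lt p'.1 hkpos
      have m2 := Nat.mod_lt p'.2 hkpos
      rw [← e1] at d1; rw [← e2] at d2
      exact ⟨by omega, by omega, by omega, by omega⟩
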